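/- For integers α ≥ 1, m ≥ 2, and μ > 0, the α-th order statistic mean waiting time T(α) = (1/(αμ))(H_{αm} - H_{αm-α}) is strictly decreasing in α, i.e., (1/(αμ))(H_{αm} - H_{αm-α}) > (1/((α+1)μ))(H_{(α+1)m} - H_{(α+1)m-(α+1)}). -/

import Mathlib

/-- The ℓ-th harmonic number H_ℓ = ∑_{i=1}^ℓ 1/i. -/
noncomputable def H (n : ℕ) : ℝ := ∑ i ∈ Finset.range n, 1 / (i + 1 : ℝ)

lemma sum_div_key (f : ℕ → ℝ) (b : ℕ) (hb : 0 < b) :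
    ∀ a : ℕ, ∑ t ∈ Finset.range (a * b), f (t / b) = b * ∑ j ∈ Finset.range a, f j := by
  intro a
  induction a with
  | zero => simp
  | succ a ih =>
    rw [Nat.succ_mul, Finset.sum_range_add, ih, Finset.sum_range_succ, mul_add]
    congr 1
    have : ∀ i ∈ Finset.range b, f ((a * b + i) / b) = f a := by
      intro i hi
      simp only [Finset.mem_range] at hi
      congr 1
      rw [mul_comm a b, Nat.mul_add_div hb, Nat.div_eq_of_lt hi, add_zero]
    rw [Finset.sum_congr rfl this, Finset.sum_const, Finset.card_range, nsmul_eq_mul]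

lemma H_diff (k n : ℕ) (hkn : k ≤ n) :
    H n - H k = ∑ j ∈ Finset.range (n - k), 1 / ((k : ℝ) + j + 1) := by
  have h : H n = H k + ∑ i ∈ Finset.Ico k n, 1 / ((i : ℝ) + 1) := by
    rw [H, H, Finset.range_eq_Ico,
      ← Finset.sum_Ico_consecutive _ (Nat.zero_le k) hkn, Finset.range_eq_Ico]
  rw [h, add_sub_cancel_left, Finset.sum_Ico_eq_sum_range]
  apply Finset.sum_congr rfl
  intro j _
  push_cast
  ring

theorem waiting_time_strictly_decreasing (α m : ℕ) (μ : ℝ)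
    (hα : 1 ≤ α) (hm : 2 ≤ m) (hμ : 0 < μ) :
    (1 / (α * μ)) * (H (α * m) - H (α * m - α)) >
      (1 / ((α + 1) * μ)) * (H ((α + 1) * m) - H ((α + 1) * m - (α + 1))) := by
  have h1 : α * m = α * (m - 1) + α := by
    calc α * m = α * (m - 1 + 1) := by rw [Nat.sub_add_cancel (by omega : 1 ≤ m)]
    _ = α * (m - 1) + α := Nat.mul_succ _ _
  have h3 : (α + 1) * m = (α + 1) * (m - 1) + (α + 1) := by
    calc (α + 1) * m = (α + 1) * (m - 1 + 1) := by
          rw [Nat.sub_add_cancel (by omega : 1 ≤ m)]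
    _ = (α + 1) * (m - 1) + (α + 1) := Nat.mul_succ _ _
  have h5 : (α + 1) * (m - 1) = α * (m - 1) + (m - 1) := Nat.succ_mul _ _
  have e1 : α * m - α = α * (m - 1) := by omega
  have e2 : (α + 1) * m - (α + 1) = (α + 1) * (m - 1) := by omega
  have le1 : α * (m - 1) ≤ α * m := by omega
  have le2 : (α + 1) * (m - 1) ≤ (α + 1) * m := by omega
  have d1 : α * m - α * (m - 1) = α := by omega
  have d2 : (α + 1) * m - (α + 1) * (m - 1) = α + 1 := by omega
  rw [e1, e2, H_diff _ _ le1, H_diff _ _ le2, d1, d2]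
  have key : ((α + 1 : ℕ) : ℝ) * ∑ j ∈ Finset.range α, 1 / (((α * (m - 1) : ℕ) : ℝ) + j + 1) >
      ((α : ℕ) : ℝ) * ∑ j ∈ Finset.range (α + 1), 1 / ((((α + 1) * (m - 1) : ℕ) : ℝ) + j + 1) := by
    rw [← sum_div_key (fun j => 1 / (((α * (m - 1) : ℕ) : ℝ) + j + 1)) (α + 1) (by omega) α,
      ← sum_div_key (fun j => 1 / ((((α + 1) * (m - 1) : ℕ) : ℝ) + j + 1)) α (by omega) (α + 1),
      gt_iff_lt, mul_comm (α + 1) α]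
    apply Finset.sum_lt_sum_of_nonempty
    · rw [Finset.nonempty_range_iff]
      positivity
    · intro t ht
      apply one_div_lt_one_div_of_lt
      · positivity
      · have hd1 : t / (α + 1) ≤ t / α := Nat.div_le_div_left (by omega) (by omega)
        have hd2 : α * (m - 1) + t / (α + 1) < (α + 1) * (m - 1) + t / α := by omega
        have := (Nat.cast_lt (α := ℝ)).2 hd2
        push_cast at this ⊢
        linarith
  have hαR : (0 : ℝ) < α := by exact_mod_cast hα
  rw [show ((α + 1 : ℕ) : ℝ) = (α : ℝ) + 1 by push_cast; ring] at key
  have hS : (0:ℝ) ≤ ∑ j ∈ Finset.range α, 1 / (((α * (m - 1) : ℕ) : ℝ) + j + 1) := by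
    positivity
  rw [gt_iff_lt, div_mul_eq_mul_div, div_mul_eq_mul_div,
    div_lt_div_iff₀ (by positivity) (by positivity)]
  nlinarith [mul_lt_mul_of_pos_left key hμ]
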